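/- Let p ≥ 1, q ≥ 1, 0 < ε < 1, M ≥ 1. For a matrix A ∈ ℝ^{n×d} define the cascaded norm ‖A‖_{(p,q)} = (Σ_{i=1}^n (Σ_{j=1}^d |A_{ij}|^q)^{p/q})^{1/p}. Let A^{(0)} = 0 and let A^{(0)}, A^{(1)}, …, A^{(m)} be matrices of nonnegative integers with entries at most M, entrywise nondecreasing in t (an insertion-only matrix stream). Then every ε-flip chain in the sequence (‖A^{(0)}‖_{(p,q)}, …, ‖A^{(m)}‖_{(p,q)}) has length at most 2 + ((ln n)/p + (ln d)/q + ln M)/ε. -/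

import Mathlib

/-- The cascaded norm `‖A‖_{(p,q)} = (∑ i, (∑ j, |A i j|^q)^{p/q})^{1/p}` of a matrix of
nonnegative integers, via real powers. -/
noncomputable def cascNorm {n d : ℕ} (p q : ℝ) (A : Fin n → Fin d → ℕ) : ℝ :=
  (∑ i, (∑ j, ((A i j : ℝ)) ^ q) ^ (p / q)) ^ (1 / p)

/-- Flip-number bound for cascaded norms on insertion-only matrix streams (application of
Proposition 3.4 noted in Section 3.1): every `ε`-flip chain in
`t ↦ ‖A^{(t)}‖_{(p,q)}` has length at most `2 + ((ln n)/p + (ln d)/q + ln M)/ε`. -/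
theorem stmt_13 (n d m : ℕ) (p q ε M : ℝ) (A : ℕ → Fin n → Fin d → ℕ)
    (hp : 1 ≤ p) (hq : 1 ≤ q) (hε0 : 0 < ε) (hε1 : ε < 1) (hM : 1 ≤ M)
    (hA0 : A 0 = 0)
    (hAbd : ∀ t ≤ m, ∀ i j, (A t i j : ℝ) ≤ M)
    (hAmono : ∀ s t, s ≤ t → t ≤ m → ∀ i j, A s i j ≤ A t i j) :
    ∀ l : List ℕ, l.Chain' (· < ·) → (∀ x ∈ l, x ≤ m) →
      l.Chain' (fun a b =>
        ¬((1 - ε) * cascNorm p q (A b) ≤ cascNorm p q (A a) ∧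
          cascNorm p q (A a) ≤ (1 + ε) * cascNorm p q (A b))) →
      (l.length : ℝ) ≤ 2 + (Real.log n / p + Real.log d / q + Real.log M) / ε := by
  intro l hlt hle hchain
  have hp0 : 0 < p := lt_of_lt_of_le one_pos hp
  have hq0 : 0 < q := lt_of_lt_of_le one_pos hq
  have hM0 : 0 < M := lt_of_lt_of_le one_pos hM
  have h1ε : 0 < 1 - ε := by linarith
  set f : ℕ → ℝ := fun t => cascNorm p q (A t) with hf
  -- nonnegativity
  have hfnn : ∀ t, 0 ≤ f t := by
    intro t
    apply Real.rpow_nonneg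
    apply Finset.sum_nonneg
    intro i _
    apply Real.rpow_nonneg
    apply Finset.sum_nonneg
    intro j _
    positivity
  -- monotonicity
  have hfmono : ∀ s t, s ≤ t → t ≤ m → f s ≤ f t := by
    intro s t hst htm
    apply Real.rpow_le_rpow ?_ ?_ (by positivity)
    · apply Finset.sum_nonneg; intro i _; positivity
    apply Finset.sum_le_sum
    intro i _
    apply Real.rpow_le_rpow ?_ ?_ (by positivity)
    · apply Finset.sum_nonneg; intro j _; positivity
    apply Finset.sum_le_sum
    intro j _
    exact Real.rpow_le_rpow (by positivity) (by exact_mod_cast hAmono s t hst htm i j)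
      (le_of_lt hq0)
  -- positivity implies ≥ 1
  have hge1 : ∀ t, 0 < f t → 1 ≤ f t := by
    intro t ht
    by_cases hex : ∃ i j, A t i j ≠ 0
    · obtain ⟨i, j, hij⟩ := hex
      have h1 : (1 : ℝ) ≤ (A t i j : ℝ) := by exact_mod_cast Nat.one_le_iff_ne_zero.mpr hij
      have h2 : (1 : ℝ) ≤ ∑ j', ((A t i j' : ℝ)) ^ q := by
        calc (1:ℝ) = (1:ℝ) ^ q := (Real.one_rpow q).symm
          _ ≤ (A t i j : ℝ) ^ q := Real.rpow_le_rpow zero_le_one h1 (le_of_lt hq0)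
          _ ≤ _ := Finset.single_le_sum (f := fun j' => ((A t i j' : ℝ)) ^ q)
              (fun j' _ => by positivity) (Finset.mem_univ j)
      have h3 : (1 : ℝ) ≤ ∑ i', (∑ j', ((A t i' j' : ℝ)) ^ q) ^ (p / q) := by
        calc (1:ℝ) = (1:ℝ) ^ (p/q) := (Real.one_rpow _).symm
          _ ≤ (∑ j', ((A t i j' : ℝ)) ^ q) ^ (p/q) :=
              Real.rpow_le_rpow zero_le_one h2 (by positivity)
          _ ≤ _ := Finset.single_le_sum (f := fun i' => (∑ j', ((A t i' j' : ℝ)) ^ q) ^ (p/q))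
              (fun i' _ => Real.rpow_nonneg (Finset.sum_nonneg fun j' _ => by positivity) _)
              (Finset.mem_univ i)
      calc (1:ℝ) = (1:ℝ) ^ (1/p) := (Real.one_rpow _).symm
        _ ≤ _ := Real.rpow_le_rpow zero_le_one h3 (by positivity)
    · push_neg at hex
      exfalso
      have : f t = 0 := by
        show cascNorm p q (A t) = 0
        unfold cascNorm
        have : ∀ i j, ((A t i j : ℝ)) = 0 := fun i j => by rw [hex i j]; simp
        simp only [this, Real.zero_rpow (ne_of_gt hq0), Finset.sum_const_zero,
          Real.zero_rpow (ne_of_gt (by positivity : (0:ℝ) < p/q)), Finset.sum_const_zero,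
          Real.zero_rpow (ne_of_gt (by positivity : (0:ℝ) < 1/p))]
      linarith
  -- strict drop condition along the chain
  rw [List.Chain', List.isChain_iff_getElem] at hchain hlt
  have hstrict : ∀ i (h : i < l.length - 1),
      f (l.get ⟨i, by omega⟩) < (1 - ε) * f (l.get ⟨i + 1, by omega⟩) := by
    intro i h
    have h1 := hchain i (by omega)
    have h2 := hlt i (by omega)
    have hbm : l.get ⟨i + 1, by omega⟩ ≤ m := hle _ (List.get_mem l _)
    have hmono := hfmono _ _ (le_of_lt h2) hbm
    by_contra hcon
    push_neg at hcon
    exact h1 ⟨hcon, by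
      have hcon' : (1 - ε) * f l[i + 1] ≤ f l[i] := hcon
      show f l[i] ≤ (1 + ε) * f l[i + 1]
      nlinarith [hfnn l[i + 1], hcon', hmono]⟩
  -- exponential growth
  set r : ℝ := (1 - ε)⁻¹ with hr
  have hr0 : 0 < r := inv_pos.mpr h1ε
  have hgrow : ∀ i (h : i < l.length - 1), r ^ i ≤ f (l.get ⟨i + 1, by omega⟩) := by
    intro i
    induction i with
    | zero =>
      intro h
      simp only [pow_zero]
      apply hge1
      have := hstrict 0 h
      have h0 := hfnn (l.get ⟨0, by omega⟩)
      nlinarith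
    | succ i ih =>
      intro h
      have h' : i < l.length - 1 := by omega
      have hs := hstrict (i + 1) h
      have hih := ih h'
      have hle2 : r ^ i * r ≤ f (l.get ⟨i + 1, by omega⟩) * r :=
        mul_le_mul_of_nonneg_right hih (le_of_lt hr0)
      have hlt2 : f (l.get ⟨i + 1, by omega⟩) * r < ((1 - ε) * f (l.get ⟨i + 2, by omega⟩)) * r :=
        mul_lt_mul_of_pos_right hs hr0
      have heq : ((1 - ε) * f (l.get ⟨i + 2, by omega⟩)) * r = f (l.get ⟨i + 2, by omega⟩) := by
        rw [hr]; field_simp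
      have : r ^ (i + 1) < f (l.get ⟨i + 2, by omega⟩) :=
        calc r ^ (i + 1) = r ^ i * r := pow_succ r i
          _ ≤ f (l.get ⟨i + 1, by omega⟩) * r := hle2
          _ < _ := hlt2
          _ = f (l.get ⟨i + 2, by omega⟩) := heq
      exact le_of_lt this
  -- trivial case: short chains
  have hlogn : 0 ≤ Real.log n := Real.log_natCast_nonneg n
  have hlogd : 0 ≤ Real.log d := Real.log_natCast_nonneg d
  have hlogM : 0 ≤ Real.log M := Real.log_nonneg hM
  have hrhs2 : (2:ℝ) ≤ 2 + (Real.log n / p + Real.log d / q + Real.log M) / ε := by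
    have : 0 ≤ (Real.log n / p + Real.log d / q + Real.log M) / ε := by positivity
    linarith
  by_cases hk : l.length ≤ 2
  · have : (l.length : ℝ) ≤ 2 := by exact_mod_cast hk
    linarith
  push_neg at hk
  -- long chain: length ≥ 3
  set k := l.length with hkdef
  have hk3 : 3 ≤ k := hk
  -- the second element has f ≥ 1, hence n, d ≥ 1
  have h1le : (1:ℝ) ≤ f (l.get ⟨1, by omega⟩) := by
    have := hgrow 0 (by omega)
    simpa using this
  have hpos1 : 0 < f (l.get ⟨1, by omega⟩) := lt_of_lt_of_le one_pos h1le
  have hn : 0 < n := by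
    by_contra hn
    push_neg at hn
    have hn' : n = 0 := by omega
    have hie : IsEmpty (Fin n) := ⟨fun i => absurd i.2 (by omega)⟩
    have hemp : (Finset.univ : Finset (Fin n)) = ∅ := Finset.univ_eq_empty
    have : f (l.get ⟨1, by omega⟩) = 0 := by
      show cascNorm p q (A _) = 0
      unfold cascNorm
      rw [hemp, Finset.sum_empty, Real.zero_rpow (ne_of_gt (by positivity : (0:ℝ) < 1/p))]
    linarith
  have hd : 0 < d := by
    by_contra hd
    push_neg at hd
    have hd' : d = 0 := by omega
    have hie : IsEmpty (Fin d) := ⟨fun j => absurd j.2 (by omega)⟩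
    have hemp : (Finset.univ : Finset (Fin d)) = ∅ := Finset.univ_eq_empty
    have : f (l.get ⟨1, by omega⟩) = 0 := by
      show cascNorm p q (A _) = 0
      unfold cascNorm
      rw [hemp]
      simp only [Finset.sum_empty, Real.zero_rpow (ne_of_gt (by positivity : (0:ℝ) < p/q)),
        Finset.sum_const_zero, Real.zero_rpow (ne_of_gt (by positivity : (0:ℝ) < 1/p))]
    linarith
  -- upper bound on f
  set U : ℝ := (n:ℝ) ^ (1/p) * (d:ℝ) ^ (1/q) * M with hU
  have hn0 : (0:ℝ) < (n:ℝ) := by exact_mod_cast hn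
  have hd0 : (0:ℝ) < (d:ℝ) := by exact_mod_cast hd
  have hUpos : 0 < U := by positivity
  have hub : ∀ t ≤ m, f t ≤ U := by
    intro t ht
    have step1 : f t ≤ ((n:ℝ) * (((d:ℝ) * M ^ q) ^ (p/q))) ^ (1/p) := by
      apply Real.rpow_le_rpow ?_ ?_ (by positivity)
      · apply Finset.sum_nonneg; intro i _; positivity
      calc ∑ i, (∑ j, ((A t i j : ℝ)) ^ q) ^ (p / q)
          ≤ ∑ _i : Fin n, ((d:ℝ) * M ^ q) ^ (p/q) := by
            apply Finset.sum_le_sum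
            intro i _
            apply Real.rpow_le_rpow ?_ ?_ (by positivity)
            · apply Finset.sum_nonneg; intro j _; positivity
            calc ∑ j, ((A t i j : ℝ)) ^ q ≤ ∑ _j : Fin d, M ^ q := by
                  apply Finset.sum_le_sum
                  intro j _
                  exact Real.rpow_le_rpow (by positivity) (hAbd t ht i j) (le_of_lt hq0)
              _ = (d:ℝ) * M ^ q := by
                  rw [Finset.sum_const, Finset.card_univ, Fintype.card_fin, nsmul_eq_mul]
        _ = (n:ℝ) * ((d:ℝ) * M ^ q) ^ (p/q) := by
            rw [Finset.sum_const, Finset.card_univ, Fintype.card_fin, nsmul_eq_mul]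
    have step2 : ((n:ℝ) * (((d:ℝ) * M ^ q) ^ (p/q))) ^ (1/p) = U := by
      have e1 : (p/q) * (1/p) = 1/q := by field_simp
      rw [Real.mul_rpow (le_of_lt hn0) (by positivity : (0:ℝ) ≤ ((d:ℝ) * M ^ q) ^ (p/q)),
        ← Real.rpow_mul (by positivity : (0:ℝ) ≤ (d:ℝ) * M ^ q), e1,
        Real.mul_rpow (le_of_lt hd0) (by positivity : (0:ℝ) ≤ M ^ q),
        ← Real.rpow_mul (le_of_lt hM0), mul_one_div, div_self (ne_of_gt hq0),
        Real.rpow_one, hU, mul_assoc]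
    rw [step2] at step1
    exact step1
  have hlast : r ^ (k - 2) ≤ U := by
    have hidx : k - 2 < l.length - 1 := by omega
    have hgr := hgrow (k - 2) hidx
    have hbm : l.get ⟨k - 2 + 1, by omega⟩ ≤ m := hle _ (List.get_mem l _)
    exact le_trans hgr (hub _ hbm)
  have hlog := Real.log_le_log (by positivity) hlast
  rw [Real.log_pow] at hlog
  have hlogr : ε ≤ Real.log r := by
    have h2 := Real.log_le_sub_one_of_pos h1ε
    rw [hr, Real.log_inv]
    linarith
  have hlogU : Real.log U = Real.log n / p + Real.log d / q + Real.log M := by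
    rw [hU, Real.log_mul (ne_of_gt (by positivity)) (ne_of_gt hM0),
      Real.log_mul (ne_of_gt (by positivity)) (ne_of_gt (by positivity)),
      Real.log_rpow hn0, Real.log_rpow hd0]
    ring
  have hk2 : ((k - 2 : ℕ) : ℝ) = (k : ℝ) - 2 := by
    push_cast [Nat.cast_sub (by omega : 2 ≤ k)]
    ring
  have hmul : ((k:ℝ) - 2) * ε ≤ Real.log n / p + Real.log d / q + Real.log M := by
    have h4 : ((k - 2 : ℕ):ℝ) * ε ≤ ((k - 2 : ℕ):ℝ) * Real.log r :=
      mul_le_mul_of_nonneg_left hlogr (by positivity)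
    calc ((k:ℝ) - 2) * ε = ((k - 2 : ℕ):ℝ) * ε := by rw [hk2]
      _ ≤ ((k - 2 : ℕ):ℝ) * Real.log r := h4
      _ ≤ Real.log U := hlog
      _ = _ := hlogU
  have hfin : (k:ℝ) - 2 ≤ (Real.log n / p + Real.log d / q + Real.log M) / ε :=
    (le_div_iff₀ hε0).mpr hmul
  show (k:ℝ) ≤ _
  linarith
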